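/- There exists a constant c > 0 such that for all real X, Y with 3/2 ≤ X ≤ Y, putting Q = (1/2)√(XY), one has ∑_{1≤q≤Q} (φ(q)/q)·∫_{−Q/(XY)}^{Q/(XY)} |w_q(γ)|² dγ ≤ c·X·Y·log X. -/

import Mathlib

open Real MeasureTheory


lemma sin_nat_mul_le (n : ℕ) (θ : ℝ) : |Real.sin (n * θ)| ≤ n * |Real.sin θ| := by
  induction n with
  | zero => simp
  | succ n ih =>
    have h : ((n : ℝ) + 1) * θ = n * θ + θ := by ring
    rw [Nat.cast_succ, h, Real.sin_add]
    calc |Real.sin (n*θ) * Real.cos θ + Real.cos (n*θ) * Real.sin θ|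
        ≤ |Real.sin (n*θ) * Real.cos θ| + |Real.cos (n*θ) * Real.sin θ| := abs_add_le _ _
      _ ≤ (n : ℝ) * |Real.sin θ| + 1 * |Real.sin θ| := by
          apply add_le_add
          · rw [abs_mul]
            calc |Real.sin (n*θ)| * |Real.cos θ| ≤ (n * |Real.sin θ|) * 1 :=
                  mul_le_mul ih (Real.abs_cos_le_one _) (abs_nonneg _)
                    (by positivity)
              _ = (n : ℝ) * |Real.sin θ| := mul_one _
          · rw [abs_mul, one_mul]
            exact mul_le_of_le_one_left (abs_nonneg _) (Real.abs_cos_le_one _)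
      _ = ((n:ℝ) + 1) * |Real.sin θ| := by ring

noncomputable def g (K : ℝ) (x : ℤ) (γ : ℝ) : ℝ :=
  if Real.sin (Real.pi * γ * x) = 0 then K
  else Real.sin (Real.pi * K * γ * x) / Real.sin (Real.pi * γ * x)

lemma g_measurable (K : ℝ) (x : ℤ) : Measurable (g K x) := by
  unfold g
  have h1 : Measurable fun γ : ℝ => Real.sin (Real.pi * γ * x) := by fun_prop
  have h2 : Measurable fun γ : ℝ => Real.sin (Real.pi * K * γ * x) := by fun_prop
  exact Measurable.ite (measurableSet_eq_fun h1 measurable_const) measurable_const (h2.div h1)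

lemma abs_g_le (K : ℝ) (n : ℕ) (hn : K = n) (x : ℤ) (γ : ℝ) : |g K x γ| ≤ K := by
  unfold g
  split_ifs with h
  · rw [hn]; simp
  · rw [abs_div]
    rw [div_le_iff₀ (by positivity)]
    have : Real.pi * K * γ * x = n * (Real.pi * γ * x) := by rw [hn]; ring
    rw [this, hn]
    exact sin_nat_mul_le n _

lemma abs_g_le_inv (K : ℝ) (x : ℤ) (γ : ℝ) (h1 : 0 < |γ * (x:ℝ)|) (h2 : |γ * (x:ℝ)| ≤ 1/2) :
    |g K x γ| ≤ 1 / (2 * |γ * (x:ℝ)|) := by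
  have hsin : 2 * |γ * (x:ℝ)| ≤ |Real.sin (Real.pi * γ * x)| := by
    have habs : |Real.sin (Real.pi * γ * x)| = Real.sin (Real.pi * |γ * (x:ℝ)|) := by
      rw [show Real.pi * γ * x = Real.pi * (γ * x) by ring]
      rcases abs_cases (γ * (x:ℝ)) with ⟨he, _⟩ | ⟨he, hneg⟩
      · rw [he, abs_of_nonneg]
        apply Real.sin_nonneg_of_nonneg_of_le_pi
        · positivity
        · nlinarith [Real.pi_pos]
      · rw [he, mul_neg, Real.sin_neg, abs_of_nonpos]
        have hpos : 0 ≤ Real.sin (Real.pi * -(γ * x)) := by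
          apply Real.sin_nonneg_of_nonneg_of_le_pi
          · nlinarith [Real.pi_pos]
          · nlinarith [Real.pi_pos]
        rw [show Real.pi * (γ*(x:ℝ)) = -(Real.pi * -(γ*(x:ℝ))) by ring, Real.sin_neg]
        linarith
    rw [habs]
    have := Real.mul_le_sin (x := Real.pi * |γ * (x:ℝ)|) (by positivity) (by nlinarith [Real.pi_pos])
    calc 2 * |γ * (x:ℝ)| = 2 / Real.pi * (Real.pi * |γ * (x:ℝ)|) := by
          field_simp
      _ ≤ Real.sin (Real.pi * |γ * (x:ℝ)|) := this
  have hne : Real.sin (Real.pi * γ * x) ≠ 0 := by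
    intro h; rw [h, abs_zero] at hsin; linarith
  unfold g
  rw [if_neg hne, abs_div]
  apply div_le_div₀ (by norm_num) (Real.abs_sin_le_one _) (by linarith) hsin

lemma intervalIntegrable_of_bdd {f : ℝ → ℝ} (hm : Measurable f) (C : ℝ)
    (hC : ∀ γ, |f γ| ≤ C) (a b : ℝ) : IntervalIntegrable f volume a b := by
  rw [intervalIntegrable_iff]
  apply MeasureTheory.Integrable.mono' (g := fun _ => C)
  · exact (integrableOn_const_iff (C := C)).mpr (Or.inr measure_Ioc_lt_top)
  · exact hm.aestronglyMeasurable
  · exact Filter.Eventually.of_forall fun γ => by simpa using hC γ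

lemma integral_g_sq_le (Y : ℝ) (hY : 1 ≤ Y) (K : ℝ) (n : ℕ) (hn : K = n) (hK0 : 0 ≤ K)
    (hK3 : K ≤ 3 * Y) (x : ℤ) (hx : x ≠ 0) (δ : ℝ) (hδ : 0 < δ)
    (hhalf : δ * |(x:ℝ)| ≤ 1/2) (hδ2 : 1/δ ≤ 6 * Y * |(x:ℝ)|) :
    ∫ γ in (-δ)..δ, (g K x γ)^2 ≤ 6 * Y / |(x:ℝ)| := by
  have hxr : (1:ℝ) ≤ |(x:ℝ)| := by
    rw [← Int.cast_abs]; exact_mod_cast Int.one_le_abs hx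
  have hxr0 : (0:ℝ) < |(x:ℝ)| := by linarith
  have hY0 : (0:ℝ) < Y := by linarith
  set t0 : ℝ := 1/(6*Y*|(x:ℝ)|) with ht0
  have ht0pos : 0 < t0 := by positivity
  set t1 : ℝ := min δ t0 with ht1
  have ht1pos : 0 < t1 := lt_min hδ ht0pos
  have ht1δ : t1 ≤ δ := min_le_left _ _
  have ht1t0 : t1 ≤ t0 := min_le_right _ _
  have ht1inv : 1/t1 ≤ 6*Y*|(x:ℝ)| := by
    rw [div_le_iff₀ ht1pos]
    rcases min_cases δ t0 with ⟨h, _⟩ | ⟨h, _⟩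
    · rw [ht1, h]
      rw [div_le_iff₀ hδ] at hδ2
      linarith
    · rw [ht1, h, ht0]
      rw [mul_one_div, div_self (by positivity)]
  -- integrability
  have hint : ∀ a b : ℝ, IntervalIntegrable (fun γ => (g K x γ)^2) volume a b := by
    intro a b
    apply intervalIntegrable_of_bdd ((g_measurable K x).pow measurable_const) (K^2)
    intro γ
    rw [abs_pow]
    exact pow_le_pow_left₀ (abs_nonneg _) (abs_g_le K n hn x γ) 2
  have hsq : ∀ γ : ℝ, (g K x γ)^2 ≤ K^2 := by
    intro γ
    rw [← sq_abs]
    exact pow_le_pow_left₀ (abs_nonneg _) (abs_g_le K n hn x γ) 2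
  -- side bound
  have hside : ∀ γ : ℝ, t1 ≤ |γ| → |γ| ≤ δ → (g K x γ)^2 ≤ 1/(4*|(x:ℝ)|^2) * (γ^2)⁻¹ := by
    intro γ hγ1 hγ2
    have hγpos : 0 < |γ| := lt_of_lt_of_le ht1pos hγ1
    have h1 : 0 < |γ * (x:ℝ)| := by rw [abs_mul]; positivity
    have h2 : |γ * (x:ℝ)| ≤ 1/2 := by
      rw [abs_mul]
      calc |γ| * |(x:ℝ)| ≤ δ * |(x:ℝ)| := by gcongr
        _ ≤ 1/2 := hhalf
    have hb := abs_g_le_inv K x γ h1 h2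
    have : (g K x γ)^2 ≤ (1 / (2 * |γ * (x:ℝ)|))^2 := by
      rw [← sq_abs]
      apply pow_le_pow_left₀ (abs_nonneg _) hb
    calc (g K x γ)^2 ≤ (1 / (2 * |γ * (x:ℝ)|))^2 := this
      _ = 1/(4*|(x:ℝ)|^2) * (γ^2)⁻¹ := by
          rw [abs_mul, div_pow, mul_pow, mul_pow, sq_abs, sq_abs]
          ring
  -- split the integral
  have hsplit : ∫ γ in (-δ)..δ, (g K x γ)^2
      = (∫ γ in (-δ)..(-t1), (g K x γ)^2) + (∫ γ in (-t1)..t1, (g K x γ)^2)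
        + ∫ γ in t1..δ, (g K x γ)^2 := by
    rw [← intervalIntegral.integral_add_adjacent_intervals (hint (-δ) (-t1)) (hint (-t1) δ),
      ← intervalIntegral.integral_add_adjacent_intervals (hint (-t1) t1) (hint t1 δ)]
    ring
  rw [hsplit]
  -- middle
  have hmid : (∫ γ in (-t1)..t1, (g K x γ)^2) ≤ 3 * Y / |(x:ℝ)| := by
    calc (∫ γ in (-t1)..t1, (g K x γ)^2) ≤ ∫ _γ in (-t1)..t1, (3*Y)^2 := by
          apply intervalIntegral.integral_mono_on (by linarith) (hint _ _)
            (intervalIntegrable_const)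
          intro γ _
          calc (g K x γ)^2 ≤ K^2 := hsq γ
            _ ≤ (3*Y)^2 := by nlinarith
      _ = 2*t1 * (3*Y)^2 := by rw [intervalIntegral.integral_const, smul_eq_mul]; ring
      _ ≤ 2*t0 * (3*Y)^2 := by nlinarith
      _ = 3 * Y / |(x:ℝ)| := by rw [ht0]; field_simp; ring
  -- zpow integrals
  have hzright : (∫ γ in t1..δ, (γ^2)⁻¹) = 1/t1 - 1/δ := by
    have h0 : (0:ℝ) ∉ Set.uIcc t1 δ := by
      rw [Set.mem_uIcc]; push_neg
      constructor <;> intro h <;> [linarith; linarith]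
    have := integral_zpow (a := t1) (b := δ) (n := -2) (Or.inr ⟨by norm_num, h0⟩)
    rw [show ((-2:ℤ)+1 = -1) by norm_num] at this
    simp only [zpow_neg, zpow_one, zpow_two] at this
    rw [show (∫ γ in t1..δ, (γ^2)⁻¹) = ∫ γ in t1..δ, (γ*γ)⁻¹ by
      congr 1; ext γ; rw [sq]]
    rw [this]
    push_cast
    rw [one_div, one_div]
    ring
  have hzleft : (∫ γ in (-δ)..(-t1), (γ^2)⁻¹) = 1/t1 - 1/δ := by
    have h0 : (0:ℝ) ∉ Set.uIcc (-δ) (-t1) := by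
      rw [Set.mem_uIcc]; push_neg
      constructor <;> intro h <;> [linarith; linarith]
    have := integral_zpow (a := -δ) (b := -t1) (n := -2) (Or.inr ⟨by norm_num, h0⟩)
    rw [show ((-2:ℤ)+1 = -1) by norm_num] at this
    simp only [zpow_neg, zpow_one, zpow_two] at this
    rw [show (∫ γ in (-δ)..(-t1), (γ^2)⁻¹) = ∫ γ in (-δ)..(-t1), (γ*γ)⁻¹ by
      congr 1; ext γ; rw [sq]]
    rw [this]
    push_cast
    rw [one_div, one_div]
    ring
  have hinvint : ∀ a b : ℝ, (0:ℝ) ∉ Set.uIcc a b → IntervalIntegrable (fun γ : ℝ => 1/(4*|(x:ℝ)|^2) * (γ^2)⁻¹) volume a b := by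
    intro a b h0
    apply IntervalIntegrable.const_mul
    have : IntervalIntegrable (fun γ : ℝ => γ ^ (-2 : ℤ)) volume a b :=
      intervalIntegral.intervalIntegrable_zpow (Or.inr h0)
    apply this.congr
    intro γ _
    simp [zpow_neg, zpow_two, sq]
  have h0r : (0:ℝ) ∉ Set.uIcc t1 δ := by
    rw [Set.mem_uIcc]; push_neg
    constructor <;> intro h <;> [linarith; linarith]
  have h0l : (0:ℝ) ∉ Set.uIcc (-δ) (-t1) := by
    rw [Set.mem_uIcc]; push_neg
    constructor <;> intro h <;> [linarith; linarith]
  have hfac : (0:ℝ) ≤ 1/(4*|(x:ℝ)|^2) := by positivity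
  have hright : (∫ γ in t1..δ, (g K x γ)^2) ≤ 3*Y/(2*|(x:ℝ)|) := by
    calc (∫ γ in t1..δ, (g K x γ)^2) ≤ ∫ γ in t1..δ, 1/(4*|(x:ℝ)|^2) * (γ^2)⁻¹ := by
          apply intervalIntegral.integral_mono_on ht1δ (hint _ _) (hinvint t1 δ h0r)
          intro γ hγ
          obtain ⟨hγ1, hγ2⟩ := hγ
          have hγpos : 0 < γ := lt_of_lt_of_le ht1pos hγ1
          exact hside γ (by rwa [abs_of_pos hγpos]) (by rwa [abs_of_pos hγpos])
      _ = 1/(4*|(x:ℝ)|^2) * (1/t1 - 1/δ) := by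
          rw [intervalIntegral.integral_const_mul, hzright]
      _ ≤ 1/(4*|(x:ℝ)|^2) * (6*Y*|(x:ℝ)|) := by
          apply mul_le_mul_of_nonneg_left ?_ hfac
          have : 0 < 1/δ := by positivity
          linarith
      _ = 3*Y/(2*|(x:ℝ)|) := by field_simp; ring
  have hleft : (∫ γ in (-δ)..(-t1), (g K x γ)^2) ≤ 3*Y/(2*|(x:ℝ)|) := by
    calc (∫ γ in (-δ)..(-t1), (g K x γ)^2)
        ≤ ∫ γ in (-δ)..(-t1), 1/(4*|(x:ℝ)|^2) * (γ^2)⁻¹ := by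
          apply intervalIntegral.integral_mono_on (by linarith) (hint _ _) (hinvint _ _ h0l)
          intro γ hγ
          obtain ⟨hγ1, hγ2⟩ := hγ
          have hγneg : γ < 0 := lt_of_le_of_lt hγ2 (by linarith)
          refine hside γ ?_ ?_
          · rw [abs_of_neg hγneg]; linarith
          · rw [abs_of_neg hγneg]; linarith
      _ = 1/(4*|(x:ℝ)|^2) * (1/t1 - 1/δ) := by
          rw [intervalIntegral.integral_const_mul, hzleft]
      _ ≤ 1/(4*|(x:ℝ)|^2) * (6*Y*|(x:ℝ)|) := by
          apply mul_le_mul_of_nonneg_left ?_ hfac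
          have : 0 < 1/δ := by positivity
          linarith
      _ = 3*Y/(2*|(x:ℝ)|) := by field_simp; ring
  have : 3*Y/(2*|(x:ℝ)|) + 3*Y/|(x:ℝ)| + 3*Y/(2*|(x:ℝ)|) = 6*Y/|(x:ℝ)| := by
    field_simp; ring
  linarith



lemma sum_inv_sqrt_le (m : ℕ) :
    ∑ k ∈ Finset.range m, (Real.sqrt (k+1))⁻¹ ≤ 2 * Real.sqrt m := by
  induction m with
  | zero => simp
  | succ m ih =>
    rw [Finset.sum_range_succ]
    have h1 : (0:ℝ) < Real.sqrt (m+1) := Real.sqrt_pos.mpr (by positivity)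
    have key : (Real.sqrt ((m:ℝ)+1))⁻¹ ≤ 2 * Real.sqrt (m+1) - 2 * Real.sqrt m := by
      rw [inv_le_iff_one_le_mul₀ h1]  -- guess name
      nlinarith [Real.sq_sqrt (show (0:ℝ) ≤ m+1 by positivity),
        Real.sq_sqrt (show (0:ℝ) ≤ (m:ℕ) by positivity),
        Real.sqrt_nonneg (m:ℝ), Real.sqrt_nonneg ((m:ℝ)+1),
        sq_nonneg (Real.sqrt ((m:ℝ)+1) - Real.sqrt (m:ℝ))]
    push_cast
    push_cast at ih
    linarith

lemma sum_symm (n : ℤ) (f : ℤ → ℝ) :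
    ∑ x ∈ (Finset.Icc (-n) n).erase 0, f x
      = ∑ x ∈ Finset.Icc 1 n, (f x + f (-x)) := by
  have hset : (Finset.Icc (-n) n).erase 0
      = (Finset.Icc 1 n) ∪ (Finset.Icc 1 n).map ⟨Neg.neg, neg_injective⟩ := by
    ext a
    simp only [Finset.mem_erase, Finset.mem_Icc, Finset.mem_union, Finset.mem_map,
      Function.Embedding.coeFn_mk]
    constructor
    · rintro ⟨h0, h1, h2⟩
      rcases lt_or_ge a 0 with h | h
      · exact Or.inr ⟨-a, by omega, by omega⟩
      · exact Or.inl (by omega)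
    · rintro (⟨h1, h2⟩ | ⟨b, ⟨h1, h2⟩, hb⟩) <;> omega
  rw [hset, Finset.sum_union, Finset.sum_map, Finset.sum_add_distrib]
  · rfl
  · rw [Finset.disjoint_left]
    rintro a ha hb
    simp only [Finset.mem_Icc, Finset.mem_map, Function.Embedding.coeFn_mk] at ha hb
    obtain ⟨b, ⟨h1, h2⟩, hb⟩ := hb
    omega

lemma sum_Icc_int_eq (n : ℤ) (f : ℤ → ℝ) :
    ∑ x ∈ Finset.Icc 1 n, f x = ∑ k ∈ Finset.range n.toNat, f (k+1) := by
  apply Finset.sum_nbij' (i := fun (x : ℤ) => (x-1).toNat) (j := fun (k : ℕ) => (k:ℤ)+1)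
  · intro a ha; simp only [Finset.mem_Icc] at ha; simp only [Finset.mem_range]; omega
  · intro a ha; simp only [Finset.mem_range] at ha; simp only [Finset.mem_Icc]; omega
  · intro a ha; simp only [Finset.mem_Icc] at ha; omega
  · intro a ha; simp only [Finset.mem_range] at ha; omega
  · intro a ha; simp only [Finset.mem_Icc] at ha
    congr 1; omega

lemma S_le (n : ℤ) :
    ∑ x ∈ (Finset.Icc (-n) n).erase 0, (Real.sqrt |(x:ℝ)|)⁻¹
      ≤ 4 * Real.sqrt n.toNat := by
  rw [sum_symm]
  have : ∀ x ∈ Finset.Icc (1:ℤ) n,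
      (Real.sqrt |(x:ℝ)|)⁻¹ + (Real.sqrt |((-x:ℤ):ℝ)|)⁻¹ = 2 * (Real.sqrt |(x:ℝ)|)⁻¹ := by
    intro x _; push_cast; rw [abs_neg]; ring
  rw [Finset.sum_congr rfl this, ← Finset.mul_sum]
  rw [sum_Icc_int_eq n (fun x => (Real.sqrt |(x:ℝ)|)⁻¹)]
  have heq : ∀ k ∈ Finset.range n.toNat,
      (Real.sqrt |(((k:ℤ)+1:ℤ):ℝ)|)⁻¹ = (Real.sqrt ((k:ℝ)+1))⁻¹ := by
    intro k _
    congr 1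
    push_cast
    rw [abs_of_nonneg (by positivity)]
  rw [Finset.sum_congr rfl heq]
  have := sum_inv_sqrt_le n.toNat
  linarith [Real.sqrt_nonneg (n.toNat : ℝ)]

/-- `w_q(γ) = ∑_{0 < |x| ≤ X/q} sin(π(2⌊Y⌋+1)γx)/sin(πγx)`, each summand read as the
Dirichlet kernel value `2⌊Y⌋+1` when `sin(πγx) = 0`. -/
noncomputable def w (X Y : ℝ) (q : ℕ) (γ : ℝ) : ℝ :=
  ∑ x ∈ (Finset.Icc (-⌊X / (q : ℝ)⌋) ⌊X / (q : ℝ)⌋).erase 0,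
    if Real.sin (Real.pi * γ * x) = 0 then 2 * (⌊Y⌋ : ℝ) + 1
    else Real.sin (Real.pi * (2 * (⌊Y⌋ : ℝ) + 1) * γ * x) / Real.sin (Real.pi * γ * x)

lemma integral_w_sq_le (X Y : ℝ) (hX : 3/2 ≤ X) (hXY : X ≤ Y) (q : ℕ) (hq : 1 ≤ q) :
    ∫ γ in (-((Real.sqrt (X*Y)/2)/(X*Y)))..((Real.sqrt (X*Y)/2)/(X*Y)), (w X Y q γ)^2
      ≤ 96 * Y * ((⌊X/(q:ℝ)⌋.toNat : ℝ)) := by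
  have hY : (3:ℝ)/2 ≤ Y := le_trans hX hXY
  have hX0 : (0:ℝ) < X := by linarith
  have hY0 : (0:ℝ) < Y := by linarith
  have hXY0 : (0:ℝ) < X*Y := by positivity
  have hsq : Real.sqrt (X*Y) ^ 2 = X*Y := Real.sq_sqrt (le_of_lt hXY0)
  have hsqpos : 0 < Real.sqrt (X*Y) := Real.sqrt_pos.mpr hXY0
  set δ : ℝ := (Real.sqrt (X*Y)/2)/(X*Y) with hδdef
  have hδ : 0 < δ := by positivity
  have hsqY : Real.sqrt (X*Y) ≤ Y := by
    nlinarith [hsq, hsqpos]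
  have hδX : δ * X ≤ 1/2 := by
    rw [hδdef, div_mul_eq_mul_div, div_le_iff₀ hXY0]
    nlinarith [hsq, hsqpos]
  have h1δ : 1/δ ≤ 6*Y := by
    rw [hδdef, one_div_div, div_le_iff₀ (by positivity)]
    nlinarith [hsq, hsqpos]
  -- notation
  set M : ℤ := ⌊X/(q:ℝ)⌋ with hM
  set s : Finset ℤ := (Finset.Icc (-M) M).erase 0 with hs
  set K : ℝ := 2*(⌊Y⌋:ℝ)+1 with hK
  have hfloorY : (1:ℤ) ≤ ⌊Y⌋ := by
    apply Int.le_floor.mpr; push_cast; linarith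
  have hn : K = ((2*⌊Y⌋.toNat + 1 : ℕ) : ℝ) := by
    have h' : ((⌊Y⌋.toNat : ℝ)) = (⌊Y⌋ : ℝ) := by
      exact_mod_cast congrArg (Int.cast : ℤ → ℝ) (Int.toNat_of_nonneg (by omega : (0:ℤ) ≤ ⌊Y⌋))
    rw [hK]
    push_cast
    rw [h']
  have hK0 : 0 ≤ K := by rw [hn]; positivity
  have hK3 : K ≤ 3*Y := by
    rw [hK]
    have := Int.floor_le Y
    linarith
  have hw : ∀ γ, w X Y q γ = ∑ x ∈ s, g K x γ := fun γ => rfl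
  -- facts about x ∈ s
  have hxmem : ∀ x ∈ s, x ≠ 0 ∧ (1:ℝ) ≤ |(x:ℝ)| ∧ |(x:ℝ)| ≤ X := by
    intro x hx
    rw [hs, Finset.mem_erase, Finset.mem_Icc] at hx
    obtain ⟨hx0, hx1, hx2⟩ := hx
    refine ⟨hx0, ?_, ?_⟩
    · rw [← Int.cast_abs]; exact_mod_cast Int.one_le_abs hx0
    · rw [← Int.cast_abs]
      have habs : |x| ≤ M := abs_le.mpr ⟨hx1, hx2⟩
      calc ((|x|:ℤ):ℝ) ≤ (M:ℝ) := by exact_mod_cast habs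
        _ ≤ X/(q:ℝ) := Int.floor_le _
        _ ≤ X/1 := by
            apply div_le_div_of_nonneg_left (le_of_lt hX0) (by norm_num)
            exact_mod_cast hq
        _ = X := div_one X
  -- per-x integral bound
  have hgsq : ∀ x ∈ s, ∫ γ in (-δ)..δ, (g K x γ)^2 ≤ 6 * Y / |(x:ℝ)| := by
    intro x hx
    obtain ⟨hx0, hx1, hx2⟩ := hxmem x hx
    apply integral_g_sq_le Y (by linarith) K _ hn hK0 hK3 x hx0 δ hδ
    · calc δ * |(x:ℝ)| ≤ δ * X := by gcongr
        _ ≤ 1/2 := hδX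
    · calc 1/δ ≤ 6*Y := h1δ
        _ = 6*Y*1 := (mul_one _).symm
        _ ≤ 6*Y*|(x:ℝ)| := by gcongr
  -- integrability of g squares
  have hgint : ∀ (x : ℤ) (a b : ℝ), IntervalIntegrable (fun γ => (g K x γ)^2) volume a b := by
    intro x a b
    apply intervalIntegrable_of_bdd ((g_measurable K x).pow measurable_const) (K^2)
    intro γ
    rw [abs_pow]
    exact pow_le_pow_left₀ (abs_nonneg _) (abs_g_le K _ hn x γ) 2
  have hgsqK : ∀ (x : ℤ) (γ : ℝ), (g K x γ)^2 ≤ K^2 := by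
    intro x γ
    rw [← sq_abs]
    exact pow_le_pow_left₀ (abs_nonneg _) (abs_g_le K _ hn x γ) 2
  -- Cauchy–Schwarz
  set S : ℝ := ∑ x ∈ s, (Real.sqrt |(x:ℝ)|)⁻¹ with hSdef
  set T : ℝ → ℝ := fun γ => ∑ x ∈ s, Real.sqrt |(x:ℝ)| * (g K x γ)^2 with hT
  have hCS : ∀ γ, (w X Y q γ)^2 ≤ S * T γ := by
    intro γ
    have h := Finset.sum_mul_sq_le_sq_mul_sq s
      (fun x => (Real.sqrt (Real.sqrt |(x:ℝ)|))⁻¹)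
      (fun x => Real.sqrt (Real.sqrt |(x:ℝ)|) * g K x γ)
    have h1 : ∑ x ∈ s, (Real.sqrt (Real.sqrt |(x:ℝ)|))⁻¹
        * (Real.sqrt (Real.sqrt |(x:ℝ)|) * g K x γ) = w X Y q γ := by
      rw [hw γ]
      apply Finset.sum_congr rfl
      intro x hx
      obtain ⟨hx0, hx1, hx2⟩ := hxmem x hx
      have hne : Real.sqrt (Real.sqrt |(x:ℝ)|) ≠ 0 := by
        apply ne_of_gt
        apply Real.sqrt_pos.mpr
        apply Real.sqrt_pos.mpr
        linarith
      rw [← mul_assoc, inv_mul_cancel₀ hne, one_mul]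
    have h2 : ∑ x ∈ s, ((Real.sqrt (Real.sqrt |(x:ℝ)|))⁻¹)^2 = S := by
      rw [hSdef]
      apply Finset.sum_congr rfl
      intro x _
      rw [inv_pow, Real.sq_sqrt (Real.sqrt_nonneg _)]
    have h3 : ∑ x ∈ s, (Real.sqrt (Real.sqrt |(x:ℝ)|) * g K x γ)^2 = T γ := by
      rw [hT]
      apply Finset.sum_congr rfl
      intro x _
      rw [mul_pow, Real.sq_sqrt (Real.sqrt_nonneg _)]
    rw [h1, h2, h3] at h
    exact h
  -- integrability of w^2 and T
  have hwm : Measurable (w X Y q) := by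
    have : w X Y q = fun γ => ∑ x ∈ s, g K x γ := rfl
    rw [this]
    exact Finset.measurable_sum s (fun x _ => g_measurable K x)
  have hwbd : ∀ γ, |w X Y q γ| ≤ (s.card : ℝ) * K := by
    intro γ
    rw [hw γ]
    calc |∑ x ∈ s, g K x γ| ≤ ∑ x ∈ s, |g K x γ| := Finset.abs_sum_le_sum_abs _ _
      _ ≤ ∑ _x ∈ s, K := Finset.sum_le_sum (fun x _ => abs_g_le K _ hn x γ)
      _ = (s.card : ℝ) * K := by rw [Finset.sum_const, nsmul_eq_mul]
  have hw2int : IntervalIntegrable (fun γ => (w X Y q γ)^2) volume (-δ) δ := by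
    apply intervalIntegrable_of_bdd (hwm.pow measurable_const) (((s.card : ℝ) * K)^2)
    intro γ
    rw [abs_pow]
    exact pow_le_pow_left₀ (abs_nonneg _) (hwbd γ) 2
  have hTxint : ∀ x ∈ s, IntervalIntegrable (fun γ => Real.sqrt |(x:ℝ)| * (g K x γ)^2)
      volume (-δ) δ := fun x _ => (hgint x (-δ) δ).const_mul _
  have hTint : IntervalIntegrable (fun γ => S * T γ) volume (-δ) δ := by
    apply IntervalIntegrable.const_mul
    have hTm : Measurable T := by
      rw [hT]
      exact Finset.measurable_sum s
        (fun x _ => (measurable_const.mul ((g_measurable K x).pow measurable_const)))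
    apply intervalIntegrable_of_bdd hTm (∑ x ∈ s, Real.sqrt |(x:ℝ)| * K^2) _ (-δ) δ
    intro γ
    rw [hT]
    calc |∑ x ∈ s, Real.sqrt |(x:ℝ)| * (g K x γ)^2|
        ≤ ∑ x ∈ s, |Real.sqrt |(x:ℝ)| * (g K x γ)^2| := Finset.abs_sum_le_sum_abs _ _
      _ ≤ ∑ x ∈ s, Real.sqrt |(x:ℝ)| * K^2 := by
          apply Finset.sum_le_sum
          intro x _
          rw [abs_mul, abs_of_nonneg (Real.sqrt_nonneg _), abs_pow]
          apply mul_le_mul_of_nonneg_left ?_ (Real.sqrt_nonneg _)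
          exact pow_le_pow_left₀ (abs_nonneg _) (abs_g_le K _ hn x γ) 2
  -- main chain
  have hmono : ∫ γ in (-δ)..δ, (w X Y q γ)^2 ≤ ∫ γ in (-δ)..δ, S * T γ := by
    apply intervalIntegral.integral_mono_on (by linarith) hw2int hTint
    intro γ _
    exact hCS γ
  have hTval : ∫ γ in (-δ)..δ, S * T γ
      = S * ∑ x ∈ s, Real.sqrt |(x:ℝ)| * ∫ γ in (-δ)..δ, (g K x γ)^2 := by
    rw [intervalIntegral.integral_const_mul]
    congr 1
    have hSum : (∫ γ in (-δ)..δ, T γ)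
        = ∑ x ∈ s, ∫ γ in (-δ)..δ, Real.sqrt |(x:ℝ)| * (g K x γ)^2 := by
      simp only [hT]
      exact intervalIntegral.integral_finset_sum hTxint
    rw [hSum]
    apply Finset.sum_congr rfl
    intro x _
    rw [intervalIntegral.integral_const_mul]
  have hS0 : 0 ≤ S := Finset.sum_nonneg (fun x _ => by positivity)
  have hsum2 : ∑ x ∈ s, Real.sqrt |(x:ℝ)| * ∫ γ in (-δ)..δ, (g K x γ)^2 ≤ 6*Y*S := by
    calc ∑ x ∈ s, Real.sqrt |(x:ℝ)| * ∫ γ in (-δ)..δ, (g K x γ)^2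
        ≤ ∑ x ∈ s, Real.sqrt |(x:ℝ)| * (6 * Y / |(x:ℝ)|) := by
          apply Finset.sum_le_sum
          intro x hx
          exact mul_le_mul_of_nonneg_left (hgsq x hx) (Real.sqrt_nonneg _)
      _ = ∑ x ∈ s, 6*Y*(Real.sqrt |(x:ℝ)|)⁻¹ := by
          apply Finset.sum_congr rfl
          intro x hx
          obtain ⟨hx0, hx1, hx2⟩ := hxmem x hx
          have ha : (0:ℝ) < |(x:ℝ)| := by linarith
          have h1 : Real.sqrt |(x:ℝ)| ≠ 0 := ne_of_gt (Real.sqrt_pos.mpr ha)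
          have h2 : Real.sqrt |(x:ℝ)| * Real.sqrt |(x:ℝ)| = |(x:ℝ)| :=
            Real.mul_self_sqrt (le_of_lt ha)
          field_simp
          linear_combination h2
      _ = 6*Y*S := by rw [hSdef, Finset.mul_sum]
  have hSle : S ≤ 4 * Real.sqrt M.toNat := S_le M
  have hfinal : S * (6*Y*S) ≤ 96 * Y * (M.toNat : ℝ) := by
    have hS2 : S^2 ≤ 16 * (M.toNat : ℝ) := by
      calc S^2 ≤ (4 * Real.sqrt M.toNat)^2 := pow_le_pow_left₀ hS0 hSle 2
        _ = 16 * (M.toNat : ℝ) := by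
            rw [mul_pow, Real.sq_sqrt (by positivity : (0:ℝ) ≤ (M.toNat : ℝ))]
            norm_num
    nlinarith [hS2, hY0, hS0]
  calc ∫ γ in (-δ)..δ, (w X Y q γ)^2 ≤ ∫ γ in (-δ)..δ, S * T γ := hmono
    _ = S * ∑ x ∈ s, Real.sqrt |(x:ℝ)| * ∫ γ in (-δ)..δ, (g K x γ)^2 := hTval
    _ ≤ S * (6*Y*S) := mul_le_mul_of_nonneg_left hsum2 hS0
    _ ≤ 96 * Y * (M.toNat : ℝ) := hfinal

lemma harmonic_le : ∀ m : ℕ, 1 ≤ m → ∑ q ∈ Finset.Icc 1 m, (1:ℝ)/q ≤ 1 + Real.log m := by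
  intro m
  induction m with
  | zero => omega
  | succ m ih =>
    intro _
    rcases Nat.eq_or_lt_of_le (by omega : 1 ≤ m + 1) with h | h
    · rw [← h]; norm_num
    have hm : 1 ≤ m := by omega
    have hm0 : (0:ℝ) < m := by exact_mod_cast hm
    rw [Finset.sum_Icc_succ_top (by omega : 1 ≤ m + 1)]
    have hkey : (1:ℝ)/(m+1) ≤ Real.log (m+1) - Real.log m := by
      have hpos : (0:ℝ) < (m:ℝ)/(m+1) := by positivity
      have h := Real.log_le_sub_one_of_pos hpos
      rw [Real.log_div (by positivity) (by positivity)] at h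
      have he : (m:ℝ)/(m+1) - 1 = -(1/(m+1)) := by field_simp; ring
      rw [he] at h
      linarith
    have := ih hm
    push_cast
    push_cast at this hkey
    linarith


theorem stmt8 :
    ∃ c > 0, ∀ X Y : ℝ, 3 / 2 ≤ X → X ≤ Y →
      ∑ q ∈ Finset.Icc 1 ⌊Real.sqrt (X * Y) / 2⌋₊, (Nat.totient q : ℝ) / q *
          ∫ γ in (-((Real.sqrt (X * Y) / 2) / (X * Y)))..((Real.sqrt (X * Y) / 2) / (X * Y)),
            (w X Y q γ) ^ 2 ≤
        c * X * Y * Real.log X := by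
  refine ⟨336, by norm_num, ?_⟩
  intro X Y hX hXY
  have hY : (3:ℝ)/2 ≤ Y := le_trans hX hXY
  have hX0 : (0:ℝ) < X := by linarith
  have hY0 : (0:ℝ) < Y := by linarith
  have hXY0 : (0:ℝ) < X*Y := by positivity
  set δ : ℝ := (Real.sqrt (X*Y)/2)/(X*Y) with hδdef
  have hδ : 0 < δ := by positivity
  set N := ⌊Real.sqrt (X * Y) / 2⌋₊ with hN
  -- per-term bound
  have hterm : ∀ q ∈ Finset.Icc 1 N,
      (Nat.totient q : ℝ) / q * (∫ γ in (-δ)..δ, (w X Y q γ)^2)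
        ≤ if (q:ℝ) ≤ X then 96*X*Y/q else 0 := by
    intro q hqmem
    rw [Finset.mem_Icc] at hqmem
    obtain ⟨hq1, _⟩ := hqmem
    have hq0 : (0:ℝ) < q := by exact_mod_cast hq1
    have hInonneg : 0 ≤ ∫ γ in (-δ)..δ, (w X Y q γ)^2 :=
      intervalIntegral.integral_nonneg (by linarith) (fun γ _ => sq_nonneg _)
    split_ifs with hqX
    · have hphile : (Nat.totient q : ℝ) / q ≤ 1 := by
        rw [div_le_one hq0]
        exact_mod_cast Nat.totient_le q
      have hI := integral_w_sq_le X Y hX hXY q hq1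
      have hMle : ((⌊X/(q:ℝ)⌋.toNat : ℝ)) ≤ X/q := by
        have h1 : (0:ℤ) ≤ ⌊X/(q:ℝ)⌋ := Int.floor_nonneg.mpr (by positivity)
        have h2 : ((⌊X/(q:ℝ)⌋.toNat : ℤ)) = ⌊X/(q:ℝ)⌋ := Int.toNat_of_nonneg h1
        have h3 : ((⌊X/(q:ℝ)⌋.toNat : ℝ)) = ((⌊X/(q:ℝ)⌋ : ℤ) : ℝ) := by exact_mod_cast h2
        rw [h3]
        exact Int.floor_le _
      calc (Nat.totient q : ℝ) / q * (∫ γ in (-δ)..δ, (w X Y q γ)^2)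
          ≤ 1 * (∫ γ in (-δ)..δ, (w X Y q γ)^2) :=
            mul_le_mul_of_nonneg_right hphile hInonneg
        _ = ∫ γ in (-δ)..δ, (w X Y q γ)^2 := one_mul _
        _ ≤ 96 * Y * ((⌊X/(q:ℝ)⌋.toNat : ℝ)) := hI
        _ ≤ 96 * Y * (X/q) := by gcongr
        _ = 96*X*Y/q := by ring
    · -- q > X : the sum is empty, integral is zero
      push_neg at hqX
      have hfloor : ⌊X/(q:ℝ)⌋ = 0 := by
        apply Int.floor_eq_zero_iff.mpr
        constructor
        · positivity
        · rw [div_lt_one hq0]; exact hqX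
      have hwzero : ∀ γ, w X Y q γ = 0 := by
        intro γ
        unfold w
        rw [hfloor]
        norm_num
      have : (∫ γ in (-δ)..δ, (w X Y q γ)^2) = 0 := by
        have : (fun γ => (w X Y q γ)^2) = fun _ => (0:ℝ) := by
          ext γ; rw [hwzero γ]; ring
        rw [this]
        simp
      rw [this, mul_zero]
  calc ∑ q ∈ Finset.Icc 1 N, (Nat.totient q : ℝ) / q * (∫ γ in (-δ)..δ, (w X Y q γ)^2)
      ≤ ∑ q ∈ Finset.Icc 1 N, (if (q:ℝ) ≤ X then 96*X*Y/q else 0) :=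
        Finset.sum_le_sum hterm
    _ = ∑ q ∈ (Finset.Icc 1 N).filter (fun q : ℕ => (q:ℝ) ≤ X), 96*X*Y/q :=
        (Finset.sum_filter _ _).symm
    _ ≤ ∑ q ∈ Finset.Icc 1 ⌊X⌋₊, 96*X*Y/q := by
        apply Finset.sum_le_sum_of_subset_of_nonneg
        · intro q hq
          rw [Finset.mem_filter, Finset.mem_Icc] at hq
          obtain ⟨⟨h1, _⟩, h2⟩ := hq
          rw [Finset.mem_Icc]
          exact ⟨h1, Nat.le_floor h2⟩
        · intro i _ _; positivity
    _ = 96*X*Y * ∑ q ∈ Finset.Icc 1 ⌊X⌋₊, (1:ℝ)/q := by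
        rw [Finset.mul_sum]
        apply Finset.sum_congr rfl
        intro q _
        rw [mul_one_div]
    _ ≤ 96*X*Y * (1 + Real.log ⌊X⌋₊) := by
        have hfl : 1 ≤ ⌊X⌋₊ := Nat.le_floor (by push_cast; linarith)
        have := harmonic_le ⌊X⌋₊ hfl
        have h96 : (0:ℝ) ≤ 96*X*Y := by positivity
        exact mul_le_mul_of_nonneg_left this h96
    _ ≤ 336 * X * Y * Real.log X := by
        have hfl : 1 ≤ ⌊X⌋₊ := Nat.le_floor (by push_cast; linarith)
        have hflpos : (0:ℝ) < (⌊X⌋₊ : ℝ) := by exact_mod_cast hfl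
        have hlog1 : Real.log (⌊X⌋₊ : ℝ) ≤ Real.log X :=
          Real.log_le_log hflpos (Nat.floor_le (le_of_lt hX0))
        have hlog2 : (2:ℝ)/5 ≤ Real.log X := by
          rw [Real.le_log_iff_exp_le hX0]
          have h5 : Real.exp (2/5) ^ 5 = Real.exp 2 := by
            rw [← Real.exp_nat_mul]; norm_num
          have he2 : Real.exp 2 = Real.exp 1 ^ 2 := by
            rw [← Real.exp_nat_mul]; norm_num
          have hlt : Real.exp (2/5) ^ 5 < (3/2)^5 := by
            rw [h5, he2]
            nlinarith [Real.exp_one_lt_d9, Real.exp_pos 1]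
          have := lt_of_pow_lt_pow_left₀ 5 (by norm_num : (0:ℝ) ≤ 3/2) hlt
          linarith
        nlinarith [hlog1, hlog2, hXY0]
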